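/- Let Z be a nonempty finite type and P, Q : Z → ℝ probability mass functions with P(z) > 0 and Q(z) > 0 for all z, and let D*(z) = P(z) / (P(z) + Q(z)). Then D* minimizes the binary cross-entropy loss: for every D : Z → ℝ with 0 < D(z) < 1 for all z, L(D) ≥ L(D*). -/

import Mathlib

lemma bce_pointwise (a b d : ℝ) (ha : 0 < a) (hb : 0 < b)
    (hd0 : 0 < d) (hd1 : d < 1) :
    a * (-Real.log (a / (a + b))) + b * (-Real.log (1 - a / (a + b)))
      ≤ a * (-Real.log d) + b * (-Real.log (1 - d)) := by
  have hab : 0 < a + b := by linarith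
  have h1 : 1 - a / (a + b) = b / (a + b) := by field_simp; ring
  rw [h1]
  have hda : 0 < d * (a + b) / a := by positivity
  have hdb : 0 < (1 - d) * (a + b) / b := by
    have : 0 < 1 - d := by linarith
    positivity
  have l1 : Real.log (d * (a + b) / a) ≤ d * (a + b) / a - 1 :=
    Real.log_le_sub_one_of_pos hda
  have l2 : Real.log ((1 - d) * (a + b) / b) ≤ (1 - d) * (a + b) / b - 1 :=
    Real.log_le_sub_one_of_pos hdb
  have e1 : Real.log (d * (a + b) / a) = Real.log d - Real.log (a / (a + b)) := by
    rw [Real.log_div (by positivity) ha.ne', Real.log_mul hd0.ne' hab.ne',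
      Real.log_div ha.ne' hab.ne']
    ring
  have e2 : Real.log ((1 - d) * (a + b) / b)
      = Real.log (1 - d) - Real.log (b / (a + b)) := by
    have h1d : 0 < 1 - d := by linarith
    rw [Real.log_div (by positivity) hb.ne', Real.log_mul h1d.ne' hab.ne',
      Real.log_div hb.ne' hab.ne']
    ring
  rw [e1] at l1
  rw [e2] at l2
  have m1 : a * (Real.log d - Real.log (a / (a + b))) ≤ d * (a + b) - a := by
    have := mul_le_mul_of_nonneg_left l1 ha.le
    calc a * (Real.log d - Real.log (a / (a + b))) ≤ a * (d * (a + b) / a - 1) := this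
      _ = d * (a + b) - a := by field_simp
  have m2 : b * (Real.log (1 - d) - Real.log (b / (a + b))) ≤ (1 - d) * (a + b) - b := by
    have := mul_le_mul_of_nonneg_left l2 hb.le
    calc b * (Real.log (1 - d) - Real.log (b / (a + b))) ≤ b * ((1 - d) * (a + b) / b - 1) := this
      _ = (1 - d) * (a + b) - b := by field_simp
  nlinarith [m1, m2]

/-- For strictly positive probability mass functions `P, Q` on a nonempty finite type
`Z`, the discriminator `D* z = P z / (P z + Q z)` minimizes the binary cross-entropy
loss `L(D) = ∑ z, P z * (-log (D z)) + ∑ z, Q z * (-log (1 - D z))` among all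
discriminators `D` with `0 < D z < 1`. -/
theorem bce_optimal_discriminator_minimizes (Z : Type*) [Fintype Z] [Nonempty Z]
    (P Q : Z → ℝ)
    (hP0 : ∀ z, 0 < P z) (hP1 : ∑ z, P z = 1)
    (hQ0 : ∀ z, 0 < Q z) (hQ1 : ∑ z, Q z = 1)
    (D : Z → ℝ) (hD0 : ∀ z, 0 < D z) (hD1 : ∀ z, D z < 1) :
    ∑ z, P z * (-Real.log (P z / (P z + Q z))) +
        ∑ z, Q z * (-Real.log (1 - P z / (P z + Q z)))
      ≤ ∑ z, P z * (-Real.log (D z)) + ∑ z, Q z * (-Real.log (1 - D z)) := by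
  rw [← Finset.sum_add_distrib, ← Finset.sum_add_distrib]
  exact Finset.sum_le_sum fun z _ =>
    bce_pointwise (P z) (Q z) (D z) (hP0 z) (hQ0 z) (hD0 z) (hD1 z)
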